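/- arXiv:1807.04237 — 2 statements merged into one kernel-verified Lean document; each statement's English description precedes it below -/
import Mathlib

section
/- Under connectedness of the graph and weights uniformly bounded below by a positive constant along the trajectory, every solution of the nonlinear consensus dynamics converges to consensus: lim_{t→∞} x(t) = x̄·𝟙, where x̄ = (1/n)∑ᵢ xᵢ(0) and 𝟙 is the all-ones vector, and the convergence is exponentially fast. -/
open Finset Filter


lemma sum_neighbor_antisymm {n : ℕ} (G : SimpleGraph (Fin n)) [DecidableRel G.Adj]
    (f : Fin n → Fin n → ℝ) (hf : ∀ i j, f j i = - f i j) :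
    ∑ i, ∑ j ∈ G.neighborFinset i, f i j = 0 := by
  have h1 : ∑ i, ∑ j ∈ G.neighborFinset i, f i j
      = ∑ i, ∑ j, if G.Adj i j then f i j else 0 := by
    refine Finset.sum_congr rfl fun i _ => ?_
    rw [SimpleGraph.neighborFinset_eq_filter, Finset.sum_filter]
  have h2 : ∑ i, ∑ j, (if G.Adj i j then f i j else 0)
      = ∑ j, ∑ i, (if G.Adj i j then f i j else 0) := Finset.sum_comm
  have h3 : ∑ j, ∑ i, (if G.Adj i j then f i j else 0)
      = - ∑ i, ∑ j, (if G.Adj i j then f i j else 0) := by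
    rw [← Finset.sum_neg_distrib]
    refine Finset.sum_congr rfl fun a _ => ?_
    rw [← Finset.sum_neg_distrib]
    refine Finset.sum_congr rfl fun b _ => ?_
    by_cases h : G.Adj a b
    · rw [if_pos ((G.adj_comm a b).mp h), if_pos h]
      exact hf a b
    · have h' : ¬ G.Adj b a := fun hh => h ((G.adj_comm b a).mp hh)
      simp [h, h']
  have h4 := h1.trans (h2.trans h3)
  linarith [h4, h1]

lemma sq_sum_identity {n : ℕ} (y : Fin n → ℝ) :
    ∑ i, ∑ j, (y i - y j)^2 = 2*n*(∑ i, (y i)^2) - 2*(∑ i, y i)^2 := by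
  have key : ∑ i, ∑ j, (y i - y j)^2
      = ∑ i : Fin n, ((n : ℝ) * y i^2 + (∑ j, y j^2) - 2 * (y i * ∑ j, y j)) := by
    refine Finset.sum_congr rfl fun i _ => ?_
    have : ∀ j : Fin n, (y i - y j)^2 = y i^2 + y j^2 - 2*(y i * y j) := fun j => by ring
    simp only [this]
    rw [Finset.sum_sub_distrib, Finset.sum_add_distrib, Finset.sum_const, Finset.card_univ,
      Fintype.card_fin, nsmul_eq_mul, ← Finset.mul_sum, ← Finset.mul_sum]
  have a1 : ∑ _x : Fin n, ∑ j, (y j)^2 = (n:ℝ) * ∑ j, (y j)^2 := by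
    rw [Finset.sum_const, Finset.card_univ, Fintype.card_fin, nsmul_eq_mul]
  have a2 : ∑ x : Fin n, 2 * (y x * ∑ j, y j) = 2 * ((∑ x, y x) * ∑ j, y j) := by
    rw [← Finset.mul_sum, ← Finset.sum_mul]
  rw [key, Finset.sum_sub_distrib, Finset.sum_add_distrib, ← Finset.mul_sum, a1, a2]
  ring

lemma walk_abs_bound {n : ℕ} {G : SimpleGraph (Fin n)} (y : Fin n → ℝ) (B : ℝ)
    (hadj : ∀ a b, G.Adj a b → |y a - y b| ≤ B) :
    ∀ {i j : Fin n} (p : G.Walk i j), |y i - y j| ≤ p.length * B := by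
  intro i j p
  induction p with
  | nil => simp
  | @cons u v z h p ih =>
    have := abs_sub_le (y u) (y v) (y z)
    have h1 := hadj u v h
    simp only [SimpleGraph.Walk.length_cons]
    push_cast
    linarith

lemma poincare {n : ℕ} (hn : 0 < n) (G : SimpleGraph (Fin n)) [DecidableRel G.Adj]
    (hconn : G.Connected) (y : Fin n → ℝ) (hy : ∑ i, y i = 0) :
    ∑ i, (y i)^2 ≤ ((n:ℝ)^3/2) * ∑ i, ∑ j ∈ G.neighborFinset i, (y i - y j)^2 := by
  set E := ∑ i, ∑ j ∈ G.neighborFinset i, (y i - y j)^2 with hE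
  have hEnn : 0 ≤ E := Finset.sum_nonneg fun i _ => Finset.sum_nonneg fun j _ => sq_nonneg _
  -- each adjacent pair bounded by sqrt E
  have hadj : ∀ a b, G.Adj a b → |y a - y b| ≤ Real.sqrt E := by
    intro a b hab
    have hterm : (y a - y b)^2 ≤ E := by
      calc (y a - y b)^2 ≤ ∑ j ∈ G.neighborFinset a, (y a - y j)^2 :=
            Finset.single_le_sum (f := fun j => (y a - y j)^2) (fun j _ => sq_nonneg _)
              ((SimpleGraph.mem_neighborFinset G a b).mpr hab)
        _ ≤ E := Finset.single_le_sum (f := fun i => ∑ j ∈ G.neighborFinset i, (y i - y j)^2)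
            (fun i _ => Finset.sum_nonneg fun j _ => sq_nonneg _) (Finset.mem_univ a)
    calc |y a - y b| = Real.sqrt ((y a - y b)^2) := (Real.sqrt_sq_eq_abs _).symm
      _ ≤ Real.sqrt E := Real.sqrt_le_sqrt hterm
  -- any pair bounded
  have hpair : ∀ i j : Fin n, (y i - y j)^2 ≤ (n:ℝ)^2 * E := by
    intro i j
    obtain ⟨p⟩ := hconn.preconnected i j
    have hlen : (p.toPath.val.length : ℝ) ≤ n := by
      have := p.toPath.property.length_lt
      have : p.toPath.val.length ≤ n := by
        simpa [Fintype.card_fin] using this.le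
      exact_mod_cast this
    have hb := walk_abs_bound y (Real.sqrt E) hadj p.toPath.val
    have habs : |y i - y j| ≤ (n:ℝ) * Real.sqrt E := by
      have hs : (0:ℝ) ≤ Real.sqrt E := Real.sqrt_nonneg _
      calc |y i - y j| ≤ p.toPath.val.length * Real.sqrt E := hb
        _ ≤ n * Real.sqrt E := by nlinarith
    have := mul_self_le_mul_self (abs_nonneg (y i - y j)) habs
    calc (y i - y j)^2 = |y i - y j| * |y i - y j| := by rw [← sq_abs]; ring
      _ ≤ ((n:ℝ) * Real.sqrt E) * ((n:ℝ) * Real.sqrt E) := this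
      _ = (n:ℝ)^2 * (Real.sqrt E * Real.sqrt E) := by ring
      _ = (n:ℝ)^2 * E := by rw [Real.mul_self_sqrt hEnn]
  have hdouble : ∑ i, ∑ j, (y i - y j)^2 ≤ (n:ℝ)^2 * (n:ℝ)^2 * E := by
    calc ∑ i, ∑ j, (y i - y j)^2 ≤ ∑ i : Fin n, ∑ j : Fin n, (n:ℝ)^2 * E :=
          Finset.sum_le_sum fun i _ => Finset.sum_le_sum fun j _ => hpair i j
      _ = (n:ℝ) * ((n:ℝ) * ((n:ℝ)^2 * E)) := by
          simp [Finset.sum_const, Finset.card_univ, mul_assoc]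
      _ = (n:ℝ)^2 * (n:ℝ)^2 * E := by ring
  have hid := sq_sum_identity y
  rw [hy] at hid
  norm_num at hid
  have hnpos : (0:ℝ) < n := by exact_mod_cast hn
  have hmain : 2*(n:ℝ)*(∑ i, (y i)^2) ≤ (n:ℝ)^2 * (n:ℝ)^2 * E := by
    linarith [hdouble, hid]
  have heq : (2*(n:ℝ)) * (((n:ℝ)^3/2)*E) = (n:ℝ)^2*(n:ℝ)^2*E := by ring
  have h3 : (2*(n:ℝ)) * (∑ i, (y i)^2) ≤ (2*(n:ℝ)) * (((n:ℝ)^3/2)*E) := by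
    linarith [hmain, heq]
  exact le_of_mul_le_mul_left h3 (by positivity)

open Finset Filter in
theorem consensus_bound {n : ℕ} (hn : 0 < n)
    (G : SimpleGraph (Fin n)) [DecidableRel G.Adj]
    (hconn : G.Connected)
    (w : Fin n → Fin n → (Fin n → ℝ) → ℝ)
    (hwSymm : ∀ i j y, w i j y = w j i y)
    (wlow : ℝ) (hwlow : 0 < wlow)
    (x : ℝ → Fin n → ℝ)
    (hbound : ∀ t : ℝ, 0 ≤ t → ∀ i j, G.Adj i j → wlow ≤ w i j (x t))
    (hdyn : ∀ t : ℝ, 0 ≤ t → ∀ i, HasDerivWithinAt (fun s => x s i)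
      (∑ j ∈ G.neighborFinset i, w i j (x t) * (x t j - x t i)) (Set.Ici 0) t) :
    ∃ C ≥ (0 : ℝ), ∃ β > (0 : ℝ), ∀ t : ℝ, 0 ≤ t → ∀ i,
      |x t i - (∑ k, x 0 k) / n| ≤ C * Real.exp (-β * t) := by
  have hnR : (0:ℝ) < n := by exact_mod_cast hn
  set xb : ℝ := (∑ k, x 0 k) / n with hxb
  set V : ℝ → ℝ := fun t => ∑ i, (x t i - xb)^2 with hV
  set D : ℝ → Fin n → ℝ :=
    fun t i => ∑ j ∈ G.neighborFinset i, w i j (x t) * (x t j - x t i) with hD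
  set β : ℝ := wlow / (n:ℝ)^3 with hβ
  have hβpos : 0 < β := by positivity
  -- conservation of the sum
  have hDsum : ∀ t : ℝ, 0 ≤ t →
      HasDerivWithinAt (fun s => ∑ i, x s i) 0 (Set.Ici 0) t := by
    intro t ht
    have h := HasDerivWithinAt.fun_sum (u := (Finset.univ : Finset (Fin n)))
      (fun i _ => hdyn t ht i)
    have hzero : ∑ i, ∑ j ∈ G.neighborFinset i, w i j (x t) * (x t j - x t i) = 0 := by
      refine sum_neighbor_antisymm G _ fun i j => ?_
      rw [hwSymm j i]; ring
    rw [hzero] at h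
    exact h
  have hconsv : ∀ t : ℝ, 0 ≤ t → ∑ i, x t i = ∑ k, x 0 k := by
    intro t ht
    rcases eq_or_lt_of_le ht with h | h
    · rw [← h]
    · have hcont : ContinuousOn (fun s => ∑ i, x s i) (Set.Icc 0 t) :=
        fun s hs => ((hDsum s hs.1).continuousWithinAt).mono Set.Icc_subset_Ici_self
      exact constant_of_has_deriv_right_zero hcont
        (fun s hs => (hDsum s hs.1).mono (Set.Ici_subset_Ici.mpr hs.1)) t
        (Set.mem_Icc.mpr ⟨ht, le_refl t⟩)
  have hsum_a : ∀ t : ℝ, 0 ≤ t → ∑ i, (x t i - xb) = 0 := by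
    intro t ht
    rw [Finset.sum_sub_distrib, Finset.sum_const, Finset.card_univ, Fintype.card_fin,
      nsmul_eq_mul, hconsv t ht, hxb]
    field_simp
    ring
  -- derivative of V
  have hVd : ∀ t : ℝ, 0 ≤ t → HasDerivWithinAt V
      (∑ i, 2 * (x t i - xb) * D t i) (Set.Ici 0) t := by
    intro t ht
    have h := HasDerivWithinAt.fun_sum (u := (Finset.univ : Finset (Fin n)))
      (fun i (_ : i ∈ Finset.univ) =>
        (((hdyn t ht i).sub_const xb).pow 2 :
          HasDerivWithinAt (fun s => (x s i - xb)^2) _ (Set.Ici 0) t))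
    convert h using 1
    · rfl
    · rfl
    · rfl
    · simp [hD]
  -- the derivative is dominated
  have hVnonneg : ∀ t : ℝ, 0 ≤ V t := fun t => Finset.sum_nonneg fun i _ => sq_nonneg _
  have hVdle : ∀ t : ℝ, 0 ≤ t →
      (∑ i, 2 * (x t i - xb) * D t i) ≤ -(2*β) * V t := by
    intro t ht
    set Q : ℝ := ∑ i, ∑ j ∈ G.neighborFinset i, w i j (x t) * (x t i - x t j)^2 with hQ
    set E : ℝ := ∑ i, ∑ j ∈ G.neighborFinset i, (x t i - x t j)^2 with hEd
    have hcancel : (∑ i, 2 * (x t i - xb) * D t i) + Q = 0 := by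
      have h0 : ∀ i, 2 * (x t i - xb) * D t i
          = ∑ j ∈ G.neighborFinset i, 2 * (x t i - xb) * (w i j (x t) * (x t j - x t i)) := by
        intro i
        rw [hD, Finset.mul_sum]
      calc (∑ i, 2 * (x t i - xb) * D t i) + Q
          = ∑ i, ∑ j ∈ G.neighborFinset i,
              (2 * (x t i - xb) * (w i j (x t) * (x t j - x t i))
                + w i j (x t) * (x t i - x t j)^2) := by
            rw [hQ, ← Finset.sum_add_distrib]
            refine Finset.sum_congr rfl fun i _ => ?_
            rw [h0 i, ← Finset.sum_add_distrib]
        _ = 0 := by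
            refine sum_neighbor_antisymm G _ fun i j => ?_
            rw [hwSymm j i]; ring
    have hQE : wlow * E ≤ Q := by
      rw [hQ, hEd, Finset.mul_sum]
      refine Finset.sum_le_sum fun i _ => ?_
      rw [Finset.mul_sum]
      refine Finset.sum_le_sum fun j hj => ?_
      exact mul_le_mul_of_nonneg_right
        (hbound t ht i j ((SimpleGraph.mem_neighborFinset G i j).mp hj)) (sq_nonneg _)
    have hpoin : V t ≤ ((n:ℝ)^3/2) * E := by
      have := poincare hn G hconn (fun i => x t i - xb) (hsum_a t ht)
      simpa [hEd, sub_sub_sub_cancel_right] using this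
    have hEV : (2*β) * V t ≤ wlow * E := by
      have h1 : (2*β) * (((n:ℝ)^3/2) * E) = wlow * E := by
        rw [hβ]; field_simp
      have h2 : (2*β) * V t ≤ (2*β) * (((n:ℝ)^3/2) * E) :=
        mul_le_mul_of_nonneg_left hpoin (by positivity)
      linarith
    linarith
  -- Gronwall via antitonicity of g t = V t * exp(2βt)
  have hVcont : ContinuousOn V (Set.Ici 0) :=
    fun s hs => ((hVd s hs).continuousWithinAt)
  have hanti : AntitoneOn (fun t => V t * Real.exp ((2*β) * t)) (Set.Ici (0:ℝ)) := by
    refine antitoneOn_of_hasDerivWithinAt_nonpos (convex_Ici 0)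
      (hVcont.mul (Real.continuous_exp.comp (continuous_const.mul continuous_id)).continuousOn)
      (f' := fun t => (∑ i, 2 * (x t i - xb) * D t i) * Real.exp ((2*β)*t)
        + V t * (Real.exp ((2*β)*t) * (2*β))) ?_ ?_
    · intro t ht
      rw [interior_Ici] at ht
      have hexp : HasDerivAt (fun s : ℝ => Real.exp ((2*β)*s))
          (Real.exp ((2*β)*t) * (2*β)) t := by
        simpa using (HasDerivAt.exp ((hasDerivAt_id t).const_mul (2*β)))
      exact ((hVd t ht.le).mono (by rw [interior_Ici]; exact Set.Ioi_subset_Ici_self)).mul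
        hexp.hasDerivWithinAt
    · intro t ht
      rw [interior_Ici] at ht
      have h1 := hVdle t ht.le
      have h2 : (0:ℝ) < Real.exp ((2*β)*t) := Real.exp_pos _
      have h3 := mul_le_mul_of_nonneg_right h1 h2.le
      show (∑ i, 2 * (x t i - xb) * D t i) * Real.exp ((2*β)*t)
        + V t * (Real.exp ((2*β)*t) * (2*β)) ≤ 0
      nlinarith [h3]
  -- the exponential bound on V
  have hVbound : ∀ t : ℝ, 0 ≤ t → V t ≤ V 0 * Real.exp (-(2*β) * t) := by
    intro t ht
    have h := hanti (Set.self_mem_Ici) ht ht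
    simp only [mul_zero, Real.exp_zero, mul_one] at h
    have hexp : Real.exp ((2*β)*t) * Real.exp (-(2*β)*t) = 1 := by
      rw [← Real.exp_add]
      norm_num
    have h3 := mul_le_mul_of_nonneg_right h (Real.exp_pos (-(2*β)*t)).le
    calc V t = V t * (Real.exp ((2*β)*t) * Real.exp (-(2*β)*t)) := by rw [hexp, mul_one]
      _ = V t * Real.exp ((2*β)*t) * Real.exp (-(2*β)*t) := by ring
      _ ≤ V 0 * Real.exp (-(2*β)*t) := h3
  refine ⟨Real.sqrt (V 0), Real.sqrt_nonneg _, β, hβpos, fun t ht i => ?_⟩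
  have hterm : (x t i - xb)^2 ≤ V t :=
    Finset.single_le_sum (f := fun i => (x t i - xb)^2) (fun j _ => sq_nonneg _)
      (Finset.mem_univ i)
  have hkey : V 0 * Real.exp (-(2*β)*t) = (Real.sqrt (V 0) * Real.exp (-β*t))^2 := by
    have hexp2 : Real.exp (-β*t) ^ 2 = Real.exp (-(2*β)*t) := by
      rw [sq, ← Real.exp_add]; congr 1; ring
    rw [mul_pow, Real.sq_sqrt (hVnonneg 0), hexp2]
  have h1 : (x t i - xb)^2 ≤ (Real.sqrt (V 0) * Real.exp (-β*t))^2 := by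
    rw [← hkey]; exact hterm.trans (hVbound t ht)
  calc |x t i - xb| = Real.sqrt ((x t i - xb)^2) := (Real.sqrt_sq_eq_abs _).symm
    _ ≤ Real.sqrt ((Real.sqrt (V 0) * Real.exp (-β*t))^2) := Real.sqrt_le_sqrt h1
    _ = Real.sqrt (V 0) * Real.exp (-β*t) := Real.sqrt_sq (by positivity)



/-- Under connectedness of the graph and weights uniformly bounded below by a positive constant
along the trajectory, every solution of the nonlinear consensus dynamics converges, exponentially
fast, to the consensus value `x̄ = (1/n)∑ᵢ xᵢ(0)`. -/
theorem consensus_convergence {n : ℕ} (hn : 0 < n)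
    (G : SimpleGraph (Fin n)) [DecidableRel G.Adj]
    (hconn : G.Connected)
    (w : Fin n → Fin n → (Fin n → ℝ) → ℝ)
    (hwSymm : ∀ i j y, w i j y = w j i y)
    (wlow : ℝ) (hwlow : 0 < wlow)
    (x : ℝ → Fin n → ℝ)
    (hbound : ∀ t : ℝ, 0 ≤ t → ∀ i j, G.Adj i j → wlow ≤ w i j (x t))
    (hdyn : ∀ t : ℝ, 0 ≤ t → ∀ i, HasDerivWithinAt (fun s => x s i)
      (∑ j ∈ G.neighborFinset i, w i j (x t) * (x t j - x t i)) (Set.Ici 0) t) :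
    (∀ i, Tendsto (fun t => x t i) atTop (nhds ((∑ k, x 0 k) / n))) ∧
      ∃ C ≥ (0 : ℝ), ∃ β > (0 : ℝ), ∀ t : ℝ, 0 ≤ t → ∀ i,
        |x t i - (∑ k, x 0 k) / n| ≤ C * Real.exp (-β * t) := by
  obtain ⟨C, hC, β, hβ, hbd⟩ :=
    consensus_bound hn G hconn w hwSymm wlow hwlow x hbound hdyn
  refine ⟨?_, C, hC, β, hβ, hbd⟩
  intro i
  have hlim : Tendsto (fun t : ℝ => C * Real.exp (-β * t)) atTop (nhds 0) := by
    have h0 : Tendsto (fun t : ℝ => β * t) atTop atTop :=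
      Tendsto.const_mul_atTop hβ tendsto_id
    have h1 : Tendsto (fun t : ℝ => -β * t) atTop atBot := by
      exact Tendsto.congr (fun t => by simp [Function.comp, neg_mul])
        (tendsto_neg_atTop_atBot.comp h0)
    have h2 : Tendsto (fun t : ℝ => Real.exp (-β * t)) atTop (nhds 0) :=
      Real.tendsto_exp_atBot.comp h1
    simpa using h2.const_mul C
  have hev : ∀ᶠ t in atTop, ‖x t i - (∑ k, x 0 k) / n‖ ≤ C * Real.exp (-β * t) :=
    (eventually_ge_atTop 0).mono fun t ht => by
      simpa [Real.norm_eq_abs] using hbd t ht i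
  have h3 : Tendsto (fun t => x t i - (∑ k, x 0 k) / n) atTop (nhds 0) :=
    squeeze_zero_norm' hev hlim
  have h4 := h3.add_const ((∑ k, x 0 k) / n)
  simpa using h4
end

section
/- For the two-agent consensus system ṗ = w(p−q)(q−p), q̇ = w(p−q)(p−q) restricted to the line p + q = 0 with weight w(z) = (1+z²)^{−α}, the function φ₂(p) = 2p·exp(∑_{n≥1} [α(α−1)⋯(α−n+1)·2^{2n−1}·p^{2n}]/(n·n!)), defined for |2p| < 1, satisfies the eigenfunction ODE: (2z/(1+z²)^α)·φ₂'(z) = 2φ₂(z) with z = 2p, i.e., it is a Koopman eigenfunction with eigenvalue −2 of the restricted dynamics. -/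
open Finset

noncomputable def binomCoef (α : ℝ) (n : ℕ) : ℝ :=
  (∏ j ∈ range n, (α - j)) / n.factorial

lemma binomCoef_zero (α : ℝ) : binomCoef α 0 = 1 := by simp [binomCoef]

lemma binomCoef_succ (α : ℝ) (n : ℕ) :
    ((n : ℝ) + 1) * binomCoef α (n + 1) = (α - n) * binomCoef α n := by
  have h0 : (n.factorial : ℝ) ≠ 0 := Nat.cast_ne_zero.mpr n.factorial_ne_zero
  have h1 : ((n : ℝ) + 1) ≠ 0 := by positivity
  simp only [binomCoef, prod_range_succ, Nat.factorial_succ]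
  push_cast
  field_simp

/-- Ratio-test summability for the derivative-type series. -/
lemma summable_S1 (α : ℝ) {r : ℝ} (hr0 : 0 ≤ r) (hr : r < 1) :
    Summable (fun n : ℕ => ((n : ℝ) + 1) * |binomCoef α (n + 1)| * r ^ n) := by
  apply summable_of_ratio_norm_eventually_le (r := (1 + r) / 2) (by linarith)
  have hN : ∀ᶠ n : ℕ in Filter.atTop, |α| * r ≤ (1 - r) / 2 * ((n : ℝ) + 1) := by
    have := Filter.eventually_ge_atTop (⌈(|α| * r) / ((1 - r) / 2)⌉₊)
    filter_upwards [this] with n hn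
    have h2 : (0:ℝ) < (1 - r) / 2 := by linarith
    have : ((|α| * r) / ((1 - r) / 2) : ℝ) ≤ n := by
      calc ((|α| * r) / ((1 - r) / 2) : ℝ) ≤ ⌈(|α| * r) / ((1 - r) / 2)⌉₊ := Nat.le_ceil _
      _ ≤ n := by exact_mod_cast hn
    rw [div_le_iff₀ h2] at this
    nlinarith [Nat.cast_nonneg (α := ℝ) n]
  filter_upwards [hN] with n hn
  have h2 := binomCoef_succ α (n + 1)
  push_cast at h2
  have hrec : ((n : ℝ) + 1 + 1) * |binomCoef α (n + 1 + 1)| =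
      |α - ((n:ℝ) + 1)| * |binomCoef α (n + 1)| := by
    calc ((n : ℝ) + 1 + 1) * |binomCoef α (n + 1 + 1)|
        = |((n : ℝ) + 1 + 1) * binomCoef α (n + 1 + 1)| := by
          rw [abs_mul, abs_of_nonneg (show (0:ℝ) ≤ (n:ℝ) + 1 + 1 by positivity)]
    _ = |(α - ((n:ℝ) + 1)) * binomCoef α (n + 1)| := by rw [h2]
    _ = |α - ((n:ℝ) + 1)| * |binomCoef α (n + 1)| := abs_mul _ _
  have hb : |α - ((n : ℝ) + 1)| ≤ |α| + ((n : ℝ) + 1) := by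
    have h := abs_add_le α (-(((n:ℝ)) + 1))
    rw [abs_neg, abs_of_nonneg (show (0:ℝ) ≤ (n:ℝ) + 1 by positivity)] at h
    simpa [sub_eq_add_neg] using h
  have hnn : (0:ℝ) ≤ |binomCoef α (n + 1)| * r ^ n := by positivity
  simp only [Real.norm_eq_abs, Nat.cast_add, Nat.cast_one]
  rw [abs_of_nonneg (show (0:ℝ) ≤ ((n:ℝ) + 1 + 1) * |binomCoef α (n + 1 + 1)| * r ^ (n + 1)
        by positivity),
      abs_of_nonneg (show (0:ℝ) ≤ ((n:ℝ) + 1) * |binomCoef α (n + 1)| * r ^ n by positivity)]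
  have heq : ((n : ℝ) + 1 + 1) * |binomCoef α (n + 1 + 1)| * r ^ (n + 1) =
      (|α - ((n:ℝ) + 1)| * r) * (|binomCoef α (n + 1)| * r ^ n) := by
    rw [pow_succ, ← mul_assoc, hrec]
    ring
  rw [heq]
  have hgoal : |α - ((n:ℝ) + 1)| * r ≤ (1 + r) / 2 * ((n : ℝ) + 1) := by
    nlinarith [abs_nonneg (α - ((n:ℝ)+1)), Nat.cast_nonneg (α := ℝ) n]
  calc (|α - ((n:ℝ) + 1)| * r) * (|binomCoef α (n + 1)| * r ^ n)
      ≤ ((1 + r) / 2 * ((n : ℝ) + 1)) * (|binomCoef α (n + 1)| * r ^ n) := by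
        exact mul_le_mul_of_nonneg_right hgoal hnn
  _ = (1 + r) / 2 * (((n : ℝ) + 1) * |binomCoef α (n + 1)| * r ^ n) := by ring

lemma summable_S3 (α : ℝ) {r : ℝ} (hr0 : 0 ≤ r) (hr : r < 1) :
    Summable (fun n : ℕ => |binomCoef α n| * r ^ n) := by
  rw [← summable_nat_add_iff 1]
  have hle : ∀ n : ℕ, |binomCoef α (n + 1)| * r ^ (n + 1) ≤
      ((n : ℝ) + 1) * |binomCoef α (n + 1)| * r ^ n := by
    intro n
    have h1 : r ^ (n + 1) ≤ r ^ n := pow_le_pow_of_le_one hr0 hr.le (Nat.le_succ n)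
    have h2 : |binomCoef α (n + 1)| ≤ ((n : ℝ) + 1) * |binomCoef α (n + 1)| := by
      nlinarith [abs_nonneg (binomCoef α (n + 1)), Nat.cast_nonneg (α := ℝ) n]
    have h3 : |binomCoef α (n + 1)| * r ^ (n + 1) ≤ |binomCoef α (n + 1)| * r ^ n :=
      mul_le_mul_of_nonneg_left h1 (abs_nonneg _)
    have h4 : |binomCoef α (n + 1)| * r ^ n ≤ ((n : ℝ) + 1) * |binomCoef α (n + 1)| * r ^ n :=
      mul_le_mul_of_nonneg_right h2 (by positivity)
    linarith
  exact Summable.of_nonneg_of_le (fun n => by positivity) hle (summable_S1 α hr0 hr)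

/-- The real binomial series. -/
lemma binomial_tsum (α : ℝ) {x : ℝ} (hx : |x| < 1) :
    ∑' n : ℕ, binomCoef α n * x ^ n = (1 + x) ^ α := by
  set r : ℝ := (|x| + 1) / 2 with hr_def
  have hr0 : 0 ≤ r := by positivity
  have hr1 : r < 1 := by rw [hr_def]; linarith
  have hxr : |x| < r := by rw [hr_def]; linarith [abs_nonneg x]
  set s : Set ℝ := Metric.ball (0 : ℝ) r with hs_def
  have hmem : ∀ y : ℝ, y ∈ s ↔ |y| < r := by
    intro y; simp [hs_def, Real.dist_eq]
  have h0s : (0:ℝ) ∈ s := by rw [hmem]; simpa using lt_of_le_of_lt (abs_nonneg x) hxr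
  have hxs : x ∈ s := by rw [hmem]; exact hxr
  set u : ℕ → ℝ := fun n => (n : ℝ) * |binomCoef α n| * r ^ (n - 1) with hu_def
  have hu : Summable u := by
    rw [← summable_nat_add_iff 1]
    have := summable_S1 α hr0 hr1
    exact this.congr (fun n => by simp [hu_def])
  set g : ℕ → ℝ → ℝ := fun n t => binomCoef α n * t ^ n with hg_def
  set g' : ℕ → ℝ → ℝ := fun n y => binomCoef α n * ((n : ℝ) * y ^ (n - 1)) with hg'_def
  have hderiv : ∀ n : ℕ, ∀ y ∈ s, HasDerivAt (g n) (g' n y) y := by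
    intro n y _
    exact (hasDerivAt_pow n y).const_mul (binomCoef α n)
  have hbound : ∀ n : ℕ, ∀ y ∈ s, ‖g' n y‖ ≤ u n := by
    intro n y hy
    rw [hmem] at hy
    simp only [hg'_def, hu_def, Real.norm_eq_abs, abs_mul, abs_pow,
      Nat.abs_cast]
    calc |binomCoef α n| * ((n:ℝ) * |y| ^ (n-1))
        ≤ |binomCoef α n| * ((n:ℝ) * r ^ (n-1)) := by
          gcongr
    _ = (n:ℝ) * |binomCoef α n| * r ^ (n-1) := by ring
  have h0 : Summable (fun n => g n (0:ℝ)) := by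
    apply summable_of_ne_finset_zero (s := {0})
    intro n hn
    have : n ≠ 0 := by simpa using hn
    simp [hg_def, zero_pow this]
  set F : ℝ → ℝ := fun y => ∑' n, g n y with hF_def
  set D : ℝ → ℝ := fun y => ∑' n, g' n y with hD_def
  have hF : ∀ y ∈ s, HasDerivAt F (D y) y := by
    intro y hy
    exact hasDerivAt_tsum_of_isPreconnected hu Metric.isOpen_ball
      (convex_ball (0:ℝ) r).isPreconnected hderiv hbound h0s h0 hy
  have hSD : ∀ y ∈ s, Summable (fun n => g' n y) := by
    intro y hy
    exact Summable.of_norm_bounded hu (fun n => hbound n y hy)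
  have hSF : ∀ y ∈ s, Summable (fun n => g n y) := by
    intro y hy
    rw [hmem] at hy
    apply Summable.of_norm_bounded (summable_S3 α hr0 hr1)
    intro n
    simp only [hg_def, Real.norm_eq_abs, abs_mul, abs_pow]
    gcongr
  -- summability of the two pieces
  have hSa : ∀ y ∈ s, Summable (fun n : ℕ => (α - (n:ℝ)) * binomCoef α n * y ^ n) := by
    intro y hy
    rw [hmem] at hy
    apply Summable.of_norm_bounded (summable_S1 α hr0 hr1)
    intro n
    rw [Real.norm_eq_abs]
    have : (α - (n:ℝ)) * binomCoef α n * y ^ n = ((n:ℝ)+1) * binomCoef α (n+1) * y ^ n := by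
      rw [binomCoef_succ]
    rw [this, abs_mul, abs_mul]
    rw [abs_of_nonneg (show (0:ℝ) ≤ (n:ℝ)+1 by positivity), abs_pow]
    gcongr
  have hSb : ∀ y ∈ s, Summable (fun n : ℕ => (n:ℝ) * binomCoef α n * y ^ n) := by
    intro y hy
    rw [hmem] at hy
    apply Summable.of_norm_bounded hu
    intro n
    rw [Real.norm_eq_abs, abs_mul, abs_mul, Nat.abs_cast, abs_pow, hu_def]
    have h1 : |y| ^ n ≤ r ^ (n - 1) := by
      have ha : |y| ^ n ≤ r ^ n := pow_le_pow_left₀ (abs_nonneg y) hy.le n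
      have hb : r ^ n ≤ r ^ (n-1) := pow_le_pow_of_le_one hr0 hr1.le (Nat.sub_le n 1)
      linarith
    exact mul_le_mul_of_nonneg_left h1 (by positivity)
  -- key ODE identity
  have key : ∀ y ∈ s, (1 + y) * D y = α * F y := by
    intro y hy
    have hD1 : D y = ∑' n : ℕ, (α - (n:ℝ)) * binomCoef α n * y ^ n := by
      have hDy : D y = ∑' n, g' n y := rfl
      rw [hDy, Summable.tsum_eq_zero_add (hSD y hy)]
      simp only [hg'_def, Nat.cast_zero, Nat.cast_add, Nat.cast_one, Nat.add_sub_cancel]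
      rw [show binomCoef α 0 * ((0:ℝ) * y ^ (0 - 1)) = 0 by simp, zero_add]
      apply tsum_congr
      intro n
      rw [← binomCoef_succ]
      push_cast
      ring
    have hyD : y * D y = ∑' n : ℕ, (n:ℝ) * binomCoef α n * y ^ n := by
      have hDy : D y = ∑' n, g' n y := rfl
      rw [hDy, ← tsum_mul_left]
      apply tsum_congr
      intro n
      cases n with
      | zero => simp [hg'_def]
      | succ m =>
        simp only [hg'_def, Nat.add_sub_cancel]
        push_cast
        ring
    have : (1 + y) * D y = D y + y * D y := by ring
    rw [this, hyD, hD1, ← Summable.tsum_add (hSa y hy) (hSb y hy)]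
    rw [hF_def, ← tsum_mul_left]
    apply tsum_congr
    intro n
    simp only [hg_def]
    ring
  -- constancy of G
  have h1y : ∀ y ∈ s, (0:ℝ) < 1 + y := by
    intro y hy
    rw [hmem] at hy
    have := abs_lt.mp (lt_trans hy hr1)
    linarith [this.1]
  set G : ℝ → ℝ := fun y => F y * (1 + y) ^ (-α) with hG_def
  have hG : ∀ y ∈ s, HasDerivAt G 0 y := by
    intro y hy
    have hy1 : (0:ℝ) < 1 + y := h1y y hy
    have hrpow : HasDerivAt (fun t : ℝ => (1 + t) ^ (-α)) (1 * (-α) * (1 + y) ^ (-α - 1)) y := by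
      have h : HasDerivAt (fun t : ℝ => 1 + t) 1 y := (hasDerivAt_id y).const_add 1
      exact h.rpow_const (Or.inl hy1.ne')
    have hmul := (hF y hy).mul hrpow
    refine hmul.congr_deriv ?_
    have hsplit : (1 + y) ^ (-α) = (1 + y) ^ (-α - 1) * (1 + y) := by
      have h := Real.rpow_add_one hy1.ne' (-α - 1)
      norm_num at h
      rw [← h]
    have hk := key y hy
    rw [hsplit]
    linear_combination ((1 + y) ^ (-α - 1)) * hk
  have hconst : G x = G 0 := by
    apply (convex_ball (0:ℝ) r).is_const_of_fderivWithin_eq_zero (𝕜 := ℝ)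
      (f := G) _ _ hxs h0s
    · intro y hy
      exact ((hG y hy).differentiableAt).differentiableWithinAt
    · intro y hy
      rw [fderivWithin_of_isOpen Metric.isOpen_ball hy]
      have := (hG y hy).hasFDerivAt.fderiv
      rw [this]
      ext t
      simp
  have hF0 : F 0 = 1 := by
    show (∑' n, g n 0) = 1
    rw [tsum_eq_single 0 (by intro n hn; simp [hg_def, zero_pow hn])]
    simp [hg_def, binomCoef_zero]
  have h1x : (0:ℝ) < 1 + x := h1y x hxs
  have : F x * (1 + x) ^ (-α) = 1 := by
    have h0' : G 0 = 1 := by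
      show F 0 * (1 + (0:ℝ)) ^ (-α) = 1
      rw [hF0]
      norm_num
    have hx' : G x = F x * (1 + x) ^ (-α) := rfl
    rw [← hx', hconst, h0']
  have hne : (1 + x) ^ (-α) ≠ 0 := by positivity
  have hFx : F x = ((1 + x) ^ (-α))⁻¹ := by
    field_simp at this ⊢
    linarith [this]
  rw [show (∑' n : ℕ, binomCoef α n * x ^ n) = F x from rfl, hFx]
  rw [← Real.rpow_neg h1x.le, neg_neg]

/-- For the two-agent consensus system with weight `w(z) = (1+z²)^{−α}`, restricted to the line
`p + q = 0` (so the disagreement `z = 2p` evolves by `ż = −2z/(1+z²)^α`), the function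
`φ(z) = z·exp(∑_{n≥1} α(α−1)⋯(α−n+1)·z^{2n}/(2n·n!))` (equivalently, in the variable `p`,
`φ₂(p) = 2p·exp(∑_{n≥1} α(α−1)⋯(α−n+1)·2^{2n−1}·p^{2n}/(n·n!))`) satisfies the Koopman
eigenfunction ODE `(2z/(1+z²)^α)·φ'(z) = 2·φ(z)` for `|z| < 1`, i.e. it is a Koopman
eigenfunction with eigenvalue `−2` of the restricted dynamics. -/
theorem two_agent_eigenfunction_ode (α : ℝ) (hα : 0 ≤ α)
    (φ : ℝ → ℝ)
    (hφ : ∀ z : ℝ, φ z = z * Real.exp (∑' k : ℕ,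
      (∏ j ∈ range (k + 1), (α - j)) * z ^ (2 * (k + 1)) /
        (2 * (k + 1) * (Nat.factorial (k + 1))))) :
    ∀ z : ℝ, |z| < 1 →
      (2 * z / (1 + z ^ 2) ^ α) * deriv φ z = 2 * φ z := by
  intro z hz
  set r : ℝ := (|z| + 1) / 2 with hr_def
  have hr0 : 0 ≤ r := by positivity
  have hr1 : r < 1 := by rw [hr_def]; linarith
  have hzr : |z| < r := by rw [hr_def]; linarith [abs_nonneg z]
  have hr2 : r ^ 2 < 1 := by nlinarith
  have hmem : ∀ y : ℝ, y ∈ Metric.ball (0:ℝ) r ↔ |y| < r := by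
    intro y; simp [Real.dist_eq]
  have h0s : (0:ℝ) ∈ Metric.ball (0:ℝ) r := by
    rw [hmem, abs_zero, hr_def]; linarith [abs_nonneg z]
  have hzs : z ∈ Metric.ball (0:ℝ) r := by rw [hmem]; exact hzr
  set g : ℕ → ℝ → ℝ := fun k t =>
      (∏ j ∈ range (k + 1), (α - j)) * t ^ (2 * (k + 1)) /
        (2 * (k + 1) * (Nat.factorial (k + 1))) with hg_def
  set g' : ℕ → ℝ → ℝ := fun k t => binomCoef α (k + 1) * t ^ (2 * k + 1) with hg'_def
  set u : ℕ → ℝ := fun k => r * (((k:ℝ) + 1) * |binomCoef α (k + 1)| * (r ^ 2) ^ k)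
    with hu_def
  have hu : Summable u := (summable_S1 α (by positivity) hr2).mul_left r
  have hfact : ∀ k : ℕ, (∏ j ∈ range (k + 1), (α - j)) =
      binomCoef α (k + 1) * (Nat.factorial (k + 1) : ℝ) := by
    intro k
    rw [binomCoef]
    field_simp
  have hderiv : ∀ k : ℕ, ∀ t ∈ Metric.ball (0:ℝ) r, HasDerivAt (g k) (g' k t) t := by
    intro k t _
    have h1 := ((hasDerivAt_pow (2 * (k + 1)) t).const_mul
        (∏ j ∈ range (k + 1), (α - (j:ℝ)))).div_const
        (2 * ((k:ℝ) + 1) * ((Nat.factorial (k + 1) : ℝ)))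
    have hexp : 2 * (k + 1) - 1 = 2 * k + 1 := by omega
    rw [hexp] at h1
    refine h1.congr_deriv ?_
    rw [hg'_def, hfact k]
    have hf0 : ((Nat.factorial (k + 1) : ℝ)) ≠ 0 := Nat.cast_ne_zero.mpr (Nat.factorial_ne_zero _)
    have hk0 : ((k:ℝ) + 1) ≠ 0 := by positivity
    push_cast
    field_simp
  have hbound : ∀ k : ℕ, ∀ t ∈ Metric.ball (0:ℝ) r, ‖g' k t‖ ≤ u k := by
    intro k t ht
    rw [hmem] at ht
    simp only [hg'_def, hu_def, Real.norm_eq_abs, abs_mul, abs_pow]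
    have h1 : |t| ^ (2 * k + 1) ≤ r ^ (2 * k + 1) :=
      pow_le_pow_left₀ (abs_nonneg t) ht.le _
    have h2 : r ^ (2 * k + 1) = r * (r ^ 2) ^ k := by
      rw [← pow_mul]
      ring
    have h3 : |binomCoef α (k + 1)| * |t| ^ (2 * k + 1) ≤
        |binomCoef α (k + 1)| * (r * (r ^ 2) ^ k) := by
      rw [← h2]; exact mul_le_mul_of_nonneg_left h1 (abs_nonneg _)
    have h4 : |binomCoef α (k + 1)| * (r * (r ^ 2) ^ k) ≤
        r * (((k:ℝ) + 1) * |binomCoef α (k + 1)| * (r ^ 2) ^ k) := by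
      have hle : |binomCoef α (k + 1)| ≤ ((k:ℝ) + 1) * |binomCoef α (k + 1)| := by
        nlinarith [abs_nonneg (binomCoef α (k + 1)), Nat.cast_nonneg (α := ℝ) k]
      have hP : (0:ℝ) ≤ (r ^ 2) ^ k := pow_nonneg (sq_nonneg r) k
      have h5 := mul_le_mul_of_nonneg_right hle (mul_nonneg hr0 hP)
      have heq : r * (((k:ℝ) + 1) * |binomCoef α (k + 1)| * (r ^ 2) ^ k) =
          (((k:ℝ) + 1) * |binomCoef α (k + 1)|) * (r * (r ^ 2) ^ k) := by ring
      rw [heq]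
      exact h5
    linarith
  have h0 : Summable (fun k => g k (0:ℝ)) := by
    have : (fun k => g k (0:ℝ)) = fun _ => (0:ℝ) := by
      funext k
      simp [hg_def, zero_pow (show 2 * (k + 1) ≠ 0 by omega)]
    rw [this]
    exact summable_zero
  set E : ℝ → ℝ := fun t => ∑' k, g k t with hE_def
  have hE : HasDerivAt E (∑' k, g' k z) z :=
    hasDerivAt_tsum_of_isPreconnected hu Metric.isOpen_ball
      (convex_ball (0:ℝ) r).isPreconnected hderiv hbound h0s h0 hzs
  -- the key sum identity
  have hx2 : |z ^ 2| < 1 := by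
    rw [abs_pow]
    calc |z| ^ 2 < 1 ^ 2 := by nlinarith [abs_nonneg z]
    _ = 1 := one_pow 2
  have hsum2 : Summable (fun n : ℕ => binomCoef α n * (z ^ 2) ^ n) := by
    apply Summable.of_norm_bounded (summable_S3 α (abs_nonneg (z ^ 2)) hx2)
    intro n
    simp [abs_mul, abs_pow]
  have hbin := binomial_tsum α hx2
  rw [Summable.tsum_eq_zero_add hsum2, binomCoef_zero] at hbin
  have htail : ∑' k : ℕ, binomCoef α (k + 1) * (z ^ 2) ^ (k + 1) = (1 + z ^ 2) ^ α - 1 := by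
    simp only [pow_zero, mul_one] at hbin
    linarith
  have key : z * ∑' k, g' k z = (1 + z ^ 2) ^ α - 1 := by
    rw [← tsum_mul_left]
    rw [← htail]
    apply tsum_congr
    intro k
    rw [hg'_def, ← pow_mul]
    ring
  -- derivative of φ
  have hφfun : φ = fun t => t * Real.exp (E t) := by
    funext t
    rw [hφ t]
  have hexp : HasDerivAt (fun t => Real.exp (E t)) (Real.exp (E z) * ∑' k, g' k z) z :=
    hE.exp
  have hprod : HasDerivAt (fun t => t * Real.exp (E t))
      (1 * Real.exp (E z) + z * (Real.exp (E z) * ∑' k, g' k z)) z :=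
    (hasDerivAt_id z).mul hexp
  have hderivφ : deriv φ z = Real.exp (E z) * (1 + z ^ 2) ^ α := by
    rw [hφfun]
    rw [hprod.deriv]
    have : z * (Real.exp (E z) * ∑' k, g' k z) =
        Real.exp (E z) * (z * ∑' k, g' k z) := by ring
    rw [one_mul, this, key]
    ring
  have hpos : (0:ℝ) < (1 + z ^ 2) ^ α := Real.rpow_pos_of_pos (by positivity) α
  rw [hderivφ, hφ z]
  have hEz : φ z = z * Real.exp (E z) := hφ z
  field_simp
  ring
end
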